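/- With W and the bilinear form as above, define e_n|m⟩ = -(q/[2])|m - 2e_n⟩ and f_n|m⟩ = q^{-1}([m_n+1][m_n+2]/[2])|m + 2e_n⟩ and k_n|m⟩ = q^{-2m_n-1}|m⟩. Then (e_n v, v') = (v, -q^{-2}k_n^{-1}f_n v') for all basis vectors v, v' of W. -/

import Mathlib

noncomputable abbrev Kq : Type := RatFunc ℚ
noncomputable abbrev q : Kq := RatFunc.X

/-- The balanced q-integer `[m] = (q^m - q^{-m})/(q - q^{-1})`. -/
noncomputable def qInt (m : ℕ) : Kq :=
  (q ^ m - q⁻¹ ^ m) / (q - q⁻¹)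

/-- The q-factorial `[m]!`. -/
noncomputable def qFac (m : ℕ) : Kq :=
  ∏ k ∈ Finset.range m, qInt (k + 1)

/-- The ℚ(q)-vector space `W` with basis `|m⟩`, `m ∈ ℤ_{≥0}^n`. -/
noncomputable abbrev W (n : ℕ) : Type := (Fin n → ℕ) →₀ Kq

/-- The basis vector `|m⟩`. -/
noncomputable def ket {n : ℕ} (m : Fin n → ℕ) : W n := Finsupp.single m 1

/-- Extension of a map defined on basis vectors to an operator on `W`. -/
noncomputable def opOf {n : ℕ} (g : (Fin n → ℕ) → W n) : W n → W n :=
  fun v => v.sum fun m c => c • g m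

/-- The symmetric bilinear form
`(|m⟩,|m'⟩) = δ_{m,m'} q^{-(1/2)Σ_i m_i(m_i-1)} / ∏_i [m_i]!`. -/
noncomputable def bform {n : ℕ} (v v' : W n) : Kq :=
  v.sum fun m c =>
    c * v' m * (q ^ (-(((∑ i, m i * (m i - 1)) / 2 : ℕ) : ℤ)) * (∏ i, qFac (m i))⁻¹)

/-- `e_n |m⟩ = -(q/[2]) |m - 2e_n⟩` (zero if `m_n < 2`). -/
noncomputable def eN {n : ℕ} (ln : Fin n) : W n → W n :=
  opOf fun m =>
    if m ln < 2 then 0 else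
      (-(q / qInt 2)) • ket (Function.update m ln (m ln - 2))

/-- `f_n |m⟩ = q^{-1}([m_n+1][m_n+2]/[2]) |m + 2e_n⟩`. -/
noncomputable def fN {n : ℕ} (ln : Fin n) : W n → W n :=
  opOf fun m =>
    (q⁻¹ * (qInt (m ln + 1) * qInt (m ln + 2) / qInt 2)) •
      ket (Function.update m ln (m ln + 2))

/-- `k_n⁻¹ |m⟩ = q^{2m_n+1} |m⟩` (since `k_n |m⟩ = q^{-2m_n-1}|m⟩`). -/
noncomputable def kInvN {n : ℕ} (ln : Fin n) : W n → W n :=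
  opOf fun m => (q ^ (2 * m ln + 1)) • ket m

lemma q_pow_ne_one (k : ℕ) (hk : k ≠ 0) : q ^ k ≠ 1 := by
  intro h
  have h2 : (algebraMap (Polynomial ℚ) Kq) (Polynomial.X ^ k) = algebraMap (Polynomial ℚ) Kq 1 := by
    simpa [map_pow, RatFunc.algebraMap_X] using h
  have h3 := IsFractionRing.injective (Polynomial ℚ) Kq h2
  have := congrArg Polynomial.natDegree h3
  simp [Polynomial.natDegree_X_pow] at this
  exact hk this

lemma q_ne_zero : (q : Kq) ≠ 0 := RatFunc.X_ne_zero

lemma qInt_ne_zero (k : ℕ) (hk : k ≠ 0) : qInt k ≠ 0 := by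
  have hnum : q ^ k - q⁻¹ ^ k ≠ 0 := by
    rw [sub_ne_zero]
    intro h
    have : q ^ k * q ^ k = 1 := by
      nth_rewrite 2 [h]; rw [inv_pow, mul_inv_cancel₀ (pow_ne_zero k q_ne_zero)]
    rw [← pow_add] at this
    exact q_pow_ne_one (k + k) (by omega) this
  have hden : q - q⁻¹ ≠ 0 := by
    rw [sub_ne_zero]
    intro h
    have : q * q = 1 := by
      nth_rewrite 2 [h]; rw [mul_inv_cancel₀ q_ne_zero]
    rw [← pow_two] at this
    exact q_pow_ne_one 2 (by omega) this
  exact div_ne_zero hnum hden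

lemma qFac_ne_zero (k : ℕ) : qFac k ≠ 0 := by
  unfold qFac
  exact Finset.prod_ne_zero_iff.mpr fun i _ => qInt_ne_zero (i + 1) (by omega)

lemma opOf_single {n : ℕ} (g : (Fin n → ℕ) → W n) (x : Fin n → ℕ) (c : Kq) :
    opOf g (Finsupp.single x c) = c • g x := by
  unfold opOf
  exact Finsupp.sum_single_index (zero_smul _ _)

lemma opOf_ket {n : ℕ} (g : (Fin n → ℕ) → W n) (x : Fin n → ℕ) :
    opOf g (ket x) = g x := by
  rw [ket, opOf_single, one_smul]

lemma bform_single {n : ℕ} (a : Fin n → ℕ) (c : Kq) (v' : W n) :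
    bform (Finsupp.single a c) v' =
      c * v' a * (q ^ (-(((∑ i, a i * (a i - 1)) / 2 : ℕ) : ℤ)) * (∏ i, qFac (a i))⁻¹) := by
  unfold bform
  exact Finsupp.sum_single_index (by simp)

lemma even_mul_pred (k : ℕ) : Even (k * (k - 1)) := by
  rcases k with _ | b
  · simp
  · simpa [Nat.mul_comm] using (Nat.even_mul_succ_self b)

lemma key_mul (a : ℕ) : (a + 2) * (a + 1) = a * (a - 1) + 4 * a + 2 := by
  rcases a with _ | b
  · simp
  · simp only [Nat.succ_sub_one]
    ring

lemma smul_ket {n : ℕ} (c : Kq) (x : Fin n → ℕ) : c • ket x = Finsupp.single x c := by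
  rw [ket, Finsupp.smul_single, smul_eq_mul, mul_one]

lemma bform_ket {n : ℕ} (a : Fin n → ℕ) (v' : W n) :
    bform (ket a) v' =
      v' a * (q ^ (-(((∑ i, a i * (a i - 1)) / 2 : ℕ) : ℤ)) * (∏ i, qFac (a i))⁻¹) := by
  rw [ket, bform_single, one_mul]

/-- polarization at the node `n` for `U_q(C_n^{(1)})`:
`(e_n v, v') = (v, -q^{-2} k_n^{-1} f_n v')` for all basis vectors `v, v'`. -/
theorem polarization_node_n (n : ℕ) (hn : 0 < n) (m m' : Fin n → ℕ) :
    bform (eN ⟨n - 1, by omega⟩ (ket m)) (ket m') =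
      bform (ket m)
        ((-(q ^ (-2 : ℤ))) • kInvN ⟨n - 1, by omega⟩ (fN ⟨n - 1, by omega⟩ (ket m'))) := by
  classical
  set l : Fin n := ⟨n - 1, by omega⟩ with hl
  set a : ℕ := m' l with ha
  -- compute RHS vector
  have hfN : fN l (ket m') =
      Finsupp.single (Function.update m' l (a + 2))
        (q⁻¹ * (qInt (a + 1) * qInt (a + 2) / qInt 2)) := by
    rw [fN, opOf_ket, ket, Finsupp.smul_single, smul_eq_mul, mul_one]
  have hupl : (Function.update m' l (a + 2)) l = a + 2 := Function.update_self l _ m'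
  have hkN : kInvN l (fN l (ket m')) =
      Finsupp.single (Function.update m' l (a + 2))
        ((q⁻¹ * (qInt (a + 1) * qInt (a + 2) / qInt 2)) * q ^ (2 * (a + 2) + 1)) := by
    rw [hfN, kInvN, opOf_single, ket, hupl, smul_smul, Finsupp.smul_single, smul_eq_mul, mul_one]
  have hrhsv : (-(q ^ (-2 : ℤ))) • kInvN l (fN l (ket m')) =
      Finsupp.single (Function.update m' l (a + 2))
        ((-(q ^ (-2 : ℤ))) * ((q⁻¹ * (qInt (a + 1) * qInt (a + 2) / qInt 2)) * q ^ (2 * (a + 2) + 1))) := by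
    rw [hkN, Finsupp.smul_single, smul_eq_mul]
  rw [eN, opOf_ket, hrhsv, bform_ket, Finsupp.single_apply]
  by_cases h2 : m l < 2
  · rw [if_pos h2]
    have hne : Function.update m' l (a + 2) ≠ m := by
      intro h
      have := congrFun h l
      rw [hupl] at this
      omega
    rw [if_neg hne, bform]
    simp
  · rw [if_neg h2, smul_ket, bform_single, ket, Finsupp.single_apply]
    by_cases hmm : Function.update m' l (a + 2) = m
    · -- matched case
      have hml : m l = a + 2 := by rw [← hmm, hupl]
      have hm' : Function.update m l (m l - 2) = m' := by
        rw [← hmm]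
        funext i
        by_cases hi : i = l
        · subst hi; simp [hml, ha]
        · simp [Function.update_of_ne hi]
      rw [if_pos hmm, if_pos hm'.symm]
      -- now pure scalar identity
      have hsum : ∀ v : ℕ, (∑ i, (Function.update m' l v) i * ((Function.update m' l v) i - 1))
          = v * (v - 1) + ∑ i ∈ Finset.univ \ {l}, m' i * (m' i - 1) := by
        intro v
        rw [Finset.sum_eq_add_sum_sdiff_singleton_of_mem (Finset.mem_univ l)
          (fun i => (Function.update m' l v) i * ((Function.update m' l v) i - 1))]
        congr 1
        · rw [Function.update_self]
        · refine Finset.sum_congr rfl fun i hi => ?_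
          rw [Function.update_of_ne (by simpa using (Finset.mem_sdiff.mp hi).2)]
      have hprod : ∀ v : ℕ, (∏ i, qFac ((Function.update m' l v) i))
          = qFac v * ∏ i ∈ Finset.univ \ {l}, qFac (m' i) := by
        intro v
        rw [Finset.prod_eq_mul_prod_sdiff_singleton_of_mem (Finset.mem_univ l)
          (fun i => qFac ((Function.update m' l v) i))]
        congr 1
        · rw [Function.update_self]
        · refine Finset.prod_congr rfl fun i hi => ?_
          rw [Function.update_of_ne (by simpa using (Finset.mem_sdiff.mp hi).2)]
      set R : ℕ := ∑ i ∈ Finset.univ \ {l}, m' i * (m' i - 1) with hR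
      set P : Kq := ∏ i ∈ Finset.univ \ {l}, qFac (m' i) with hP
      have hevR : Even R := Finset.even_sum _ fun i _ => even_mul_pred (m' i)
      obtain ⟨r, hr⟩ := hevR
      obtain ⟨s, hs⟩ := even_mul_pred a
      have hkey := key_mul a
      have hsum1 : (∑ i, m i * (m i - 1)) / 2 = s + 2 * a + 1 + r := by
        rw [← hmm, hsum, show a + 2 - 1 = a + 1 from rfl]
        omega
      have hsum2 : (∑ i, m' i * (m' i - 1)) / 2 = s + r := by
        have := hsum a
        rw [Function.update_eq_self] at this
        rw [this]
        omega
      have hprod1 : (∏ i, qFac (m i)) = qFac (a + 2) * P := by rw [← hmm, hprod]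
      have hprod2 : (∏ i, qFac (m' i)) = qFac a * P := by
        have := hprod a
        rw [Function.update_eq_self] at this
        rw [this]
      have hfac : qFac (a + 2) = qFac a * qInt (a + 1) * qInt (a + 2) := by
        rw [qFac, Finset.prod_range_succ, Finset.prod_range_succ, ← qFac]
      rw [hm', hsum1, hsum2, hprod1, hprod2, hfac]
      have h1 : qInt (a + 1) ≠ 0 := qInt_ne_zero _ (by omega)
      have h2' : qInt (a + 2) ≠ 0 := qInt_ne_zero _ (by omega)
      have h0 : qInt 2 ≠ 0 := qInt_ne_zero 2 (by omega)
      have hPne : P ≠ 0 := by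
        rw [hP]
        exact Finset.prod_ne_zero_iff.mpr fun i _ => qFac_ne_zero _
      have hFne : qFac a ≠ 0 := qFac_ne_zero a
      have hq : (q : Kq) ≠ 0 := q_ne_zero
      -- convert zpow to pow
      rw [show ((-2 : ℤ)) = -((2 : ℕ) : ℤ) by norm_num]
      rw [zpow_neg, zpow_neg, zpow_neg, zpow_natCast, zpow_natCast, zpow_natCast]
      rw [← mul_inv, ← mul_inv, ← div_eq_mul_inv, ← div_eq_mul_inv]
      rw [div_eq_div_iff
        (mul_ne_zero (pow_ne_zero _ hq) (mul_ne_zero hFne hPne))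
        (mul_ne_zero (pow_ne_zero _ hq)
          (mul_ne_zero (mul_ne_zero (mul_ne_zero hFne h1) h2') hPne))]
      field_simp
      ring
    · -- unmatched case
      have hne : m' ≠ Function.update m l (m l - 2) := by
        intro h
        apply hmm
        funext i
        by_cases hi : i = l
        · subst hi
          rw [hupl, ha, h, Function.update_self]
          omega
        · rw [Function.update_of_ne hi, h, Function.update_of_ne hi]
      rw [if_neg hmm, if_neg hne]
      ring
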